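/- Let Ω be a finite nonempty set with a distinguished element ω⁰, and let ρ : Ω × I × J → Δ(Ω) be a transition function, written ρ(ω'|ω,i,j). Let ε > 0, C > 0, and let u, v : Δ(K) × Δ(L) × Ω → ℝ be bounded functions such that: (i) u(p',q',ω) = v(p',q',ω) for all (p',q') and all ω ≠ ω⁰; (ii) for every q' ∈ Δ(L) and ω ∈ Ω the map p' ↦ v(p',q',ω) is C-Lipschitz with respect to ‖·‖₁, and p' ↦ v(p',q',ω⁰) is concave on Δ(K). Let p ∈ Δ(K), q ∈ Δ(L), x a mixed action, x' an ε-convexification of x at p, and y : L → Δ(J). Set r(j) := ∑_{i∈I} ρ(ω⁰|ω⁰,i,j)·x̄^p(i), R := ∑_{j∈J} ȳ^q(j)·r(j), D := inf_{(p',q') ∈ Δ(K)×Δ(L)} (u(p',q',ω⁰) − v(p',q',ω⁰)), and for any mixed action z define E[z](f) := ∑_{i,j,ω} ρ(ω|ω⁰,i,j)·z̄^p(i)·ȳ^q(j)·f(p^z(·|i), q^y(·|j), ω). Then E[x'](u) − E[x](v) ≥ D·R − 2·(1−R)·ε·C. -/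
import Mathlib


open Finset

noncomputable section
open Classical

/-- `p` is an element of the probability simplex Δ(K). -/
def pSimplex {K : Type*} [Fintype K] (p : K → ℝ) : Prop :=
  (∀ k, 0 ≤ p k) ∧ ∑ k, p k = 1

/-- `x : K → Δ(I)` is a mixed action, written `x k i = x(i|k)`. -/
def MixedAction {K I : Type*} [Fintype K] [Fintype I] (x : K → I → ℝ) : Prop :=
  (∀ k i, 0 ≤ x k i) ∧ ∀ k, ∑ i, x k i = 1

/-- Marginal `x̄^p(i) = ∑_k p(k)·x(i|k)`. -/
def bar {K I : Type*} [Fintype K] (p : K → ℝ) (x : K → I → ℝ) (i : I) : ℝ :=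
  ∑ k, p k * x k i

/-- Posterior `p^x(k|i)`. -/
def post {K I : Type*} [Fintype K] (p : K → ℝ) (x : K → I → ℝ) (i : I) (k : K) : ℝ :=
  if bar p x i ≠ 0 then x k i * p k / bar p x i else p k

/-- The set `NR[x,ε,p]` of (x,ε)-non-revealing actions at p. -/
def NRset {K I : Type*} [Fintype K] [Fintype I] (x : K → I → ℝ) (ε : ℝ) (p : K → ℝ) :
    Finset I :=
  Finset.univ.filter fun i =>
    bar p x i ≠ 0 ∧ ∀ k, (1 - ε) * bar p x i ≤ x k i ∧ x k i ≤ (1 + ε) * bar p x i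

/-- The set `R[x,ε,p]` of (x,ε)-revealing actions at p. -/
def Rset {K I : Type*} [Fintype K] [Fintype I] (x : K → I → ℝ) (ε : ℝ) (p : K → ℝ) :
    Finset I :=
  (Finset.univ.filter fun i => bar p x i ≠ 0) \ NRset x ε p

/-- `x(A|k) = ∑_{i∈A} x(i|k)`. -/
def xOn {K I : Type*} (x : K → I → ℝ) (A : Finset I) (k : K) : ℝ := ∑ i ∈ A, x k i

/-- `x̄^p(A) = ∑_{i∈A} x̄^p(i)`. -/
def barOn {K I : Type*} [Fintype K] (p : K → ℝ) (x : K → I → ℝ) (A : Finset I) : ℝ :=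
  ∑ i ∈ A, bar p x i

/-- The ε-silent mapping `c_ε(x,p)`. -/
def silent {K I : Type*} [Fintype K] [Fintype I] (ε : ℝ) (x : K → I → ℝ) (p : K → ℝ) :
    K → I → ℝ :=
  fun k i =>
    if i ∈ NRset x ε p then
      ((1 - ε) * xOn x (NRset x ε p) k / barOn p x (NRset x ε p) + ε) * bar p x i
    else (1 - ε) * x k i + ε * bar p x i

lemma bar_nonneg {K I : Type*} [Fintype K] {p : K → ℝ} {x : K → I → ℝ}
    (hp : pSimplex p) (hx : ∀ k i, 0 ≤ x k i) (i : I) : 0 ≤ bar p x i :=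
  Finset.sum_nonneg fun k _ => mul_nonneg (hp.1 k) (hx k i)

lemma bar_sum {K I : Type*} [Fintype K] [Fintype I] {p : K → ℝ} {x : K → I → ℝ}
    (hp : pSimplex p) (hx : MixedAction x) : ∑ i, bar p x i = 1 := by
  unfold bar
  rw [Finset.sum_comm]
  simp_rw [← Finset.mul_sum, hx.2, mul_one]
  exact hp.2

lemma pSimplex_post {K I : Type*} [Fintype K] {p : K → ℝ} {x : K → I → ℝ}
    (hp : pSimplex p) (hx : ∀ k i, 0 ≤ x k i) (i : I) : pSimplex (post p x i) := by
  unfold post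
  by_cases h : bar p x i ≠ 0
  · have hb : 0 < bar p x i := lt_of_le_of_ne (bar_nonneg hp hx i) (Ne.symm h)
    simp only [if_pos h]
    constructor
    · intro k; exact div_nonneg (mul_nonneg (hx k i) (hp.1 k)) hb.le
    · rw [← Finset.sum_div]
      rw [div_eq_one_iff_eq (ne_of_gt hb)]
      unfold bar; exact Finset.sum_congr rfl fun k _ => mul_comm _ _
  · simp only [if_neg h]; exact hp

/-- key absorbing-game inequality (Lemma 3.9 of the paper):
E[x'](u) − E[x](v) ≥ D·R − 2·(1−R)·ε·C. -/
theorem convexification_expectation_bound {K L I J Ω : Type*}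
    [Fintype K] [Fintype L] [Fintype I] [Fintype J] [Fintype Ω]
    [Nonempty K] [Nonempty L] [Nonempty I] [Nonempty J] [Nonempty Ω]
    (ω0 : Ω) (ρ : Ω → I → J → Ω → ℝ)
    (hρ0 : ∀ ω i j ω', 0 ≤ ρ ω i j ω')
    (hρ1 : ∀ ω i j, ∑ ω', ρ ω i j ω' = 1)
    (ε C : ℝ) (hε : 0 < ε) (hC : 0 < C)
    (u v : (K → ℝ) → (L → ℝ) → Ω → ℝ)
    (hu_bdd : ∃ M : ℝ, ∀ p' q' ω, pSimplex p' → pSimplex q' → |u p' q' ω| ≤ M)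
    (hv_bdd : ∃ M : ℝ, ∀ p' q' ω, pSimplex p' → pSimplex q' → |v p' q' ω| ≤ M)
    (huv : ∀ p' q' ω, ω ≠ ω0 → pSimplex p' → pSimplex q' → u p' q' ω = v p' q' ω)
    (hlip : ∀ q' ω p1 p2, pSimplex q' → pSimplex p1 → pSimplex p2 →
      |v p1 q' ω - v p2 q' ω| ≤ C * ∑ k, |p1 k - p2 k|)
    (hconcave : ∀ q' p1 p2 t, pSimplex q' → pSimplex p1 → pSimplex p2 →
      0 ≤ t → t ≤ 1 →
      t * v p1 q' ω0 + (1 - t) * v p2 q' ω0 ≤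
        v (fun k => t * p1 k + (1 - t) * p2 k) q' ω0)
    (p : K → ℝ) (hp : pSimplex p) (q : L → ℝ) (hq : pSimplex q)
    (x x' : K → I → ℝ) (hx : MixedAction x) (hx' : MixedAction x')
    (y : L → J → ℝ) (hy : MixedAction y)
    (hconv : ∃ β : I → I → ℝ,
      (∀ i i', 0 ≤ β i i') ∧
      (∀ (i : I) (k : K), post p x' i k = ∑ i', β i i' * post p x i' k) ∧
      (∀ i : I, bar p x' i = bar p x i) ∧
      (∀ i' : I, ∑ i, β i i' * bar p x i = bar p x i') ∧
      (∀ i : I, ∑ k, |post p x' i k - post p x i k| ≤ ε)) :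
    sInf {d : ℝ | ∃ p' q', pSimplex p' ∧ pSimplex q' ∧ d = u p' q' ω0 - v p' q' ω0} *
        (∑ j, bar q y j * ∑ i, ρ ω0 i j ω0 * bar p x i) -
      2 * (1 - ∑ j, bar q y j * ∑ i, ρ ω0 i j ω0 * bar p x i) * ε * C ≤
    (∑ i, ∑ j, ∑ ω, ρ ω0 i j ω * bar p x' i * bar q y j *
        u (post p x' i) (post q y j) ω) -
      ∑ i, ∑ j, ∑ ω, ρ ω0 i j ω * bar p x i * bar q y j *
        v (post p x i) (post q y j) ω := by
    classical
  obtain ⟨β, hβ0, hβpost, hβbar, hβsum, hβeps⟩ := hconv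
  obtain ⟨Mu, hMu⟩ := hu_bdd
  obtain ⟨Mv, hMv⟩ := hv_bdd
  set S : Set ℝ :=
    {d : ℝ | ∃ p' q', pSimplex p' ∧ pSimplex q' ∧ d = u p' q' ω0 - v p' q' ω0} with hS
  set D := sInf S with hDdef
  set Rv := ∑ j, bar q y j * ∑ i, ρ ω0 i j ω0 * bar p x i with hRv
  have hpx : ∀ i, pSimplex (post p x i) := fun i => pSimplex_post hp hx.1 i
  have hpx' : ∀ i, pSimplex (post p x' i) := fun i => pSimplex_post hp hx'.1 i
  have hqy : ∀ j, pSimplex (post q y j) := fun j => pSimplex_post hq hy.1 j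
  have hxb0 : ∀ i, 0 ≤ bar p x i := bar_nonneg hp hx.1
  have hyb0 : ∀ j, 0 ≤ bar q y j := bar_nonneg hq hy.1
  have hxbs : ∑ i, bar p x i = 1 := bar_sum hp hx
  have hybs : ∑ j, bar q y j = 1 := bar_sum hq hy
  have hSbdd : BddBelow S := by
    refine ⟨-(Mu + Mv), ?_⟩
    rintro d ⟨p', q', hp', hq', rfl⟩
    have h1 := abs_le.1 (hMu p' q' ω0 hp' hq')
    have h2 := abs_le.1 (hMv p' q' ω0 hp' hq')
    linarith [h1.1, h2.2]
  have hDle : ∀ p' q', pSimplex p' → pSimplex q' → D ≤ u p' q' ω0 - v p' q' ω0 :=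
    fun p' q' h1 h2 => csInf_le hSbdd ⟨p', q', h1, h2, rfl⟩
  have hρle : ∀ i j, ρ ω0 i j ω0 ≤ 1 := by
    intro i j
    have h1 := hρ1 ω0 i j
    have h2 : ρ ω0 i j ω0 ≤ ∑ ω', ρ ω0 i j ω' :=
      Finset.single_le_sum (fun ω' _ => hρ0 ω0 i j ω') (Finset.mem_univ ω0)
    linarith
  have hvclose : ∀ i j ω,
      |v (post p x' i) (post q y j) ω - v (post p x i) (post q y j) ω| ≤ ε * C := by
    intro i j ω
    calc |v (post p x' i) (post q y j) ω - v (post p x i) (post q y j) ω|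
        ≤ C * ∑ k, |post p x' i k - post p x i k| :=
          hlip _ ω _ _ (hqy j) (hpx' i) (hpx i)
      _ ≤ ε * C := by
          have := hβeps i
          nlinarith
  -- row sums of β are 1
  have hβrow : ∀ i, ∑ i', β i i' = 1 := by
    intro i
    have h2 : ∑ k, post p x' i k = ∑ i', β i i' * ∑ k, post p x i' k := by
      simp_rw [hβpost]
      rw [Finset.sum_comm]
      exact Finset.sum_congr rfl fun i' _ => (Finset.mul_sum _ _ _).symm
    have h3 : ∀ i' : I, ∑ k, post p x i' k = 1 := fun i' => (hpx i').2
    rw [(hpx' i).2] at h2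
    simp_rw [h3, mul_one] at h2
    exact h2.symm
  -- convexity of the simplex
  have hsimplexConvex : Convex ℝ {p' : K → ℝ | pSimplex p'} := by
    intro p1 hp1 p2 hp2 a b ha hb hab
    simp only [Set.mem_setOf_eq] at hp1 hp2 ⊢
    constructor
    · intro k
      have := hp1.1 k; have := hp2.1 k
      simp only [Pi.add_apply, Pi.smul_apply, smul_eq_mul]
      nlinarith
    · simp only [Pi.add_apply, Pi.smul_apply, smul_eq_mul]
      rw [Finset.sum_add_distrib, ← Finset.mul_sum, ← Finset.mul_sum, hp1.2, hp2.2]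
      linarith
  have hconcOn : ∀ q', pSimplex q' →
      ConcaveOn ℝ {p' : K → ℝ | pSimplex p'} (fun p' => v p' q' ω0) := by
    intro q' hq'
    refine ⟨hsimplexConvex, ?_⟩
    intro p1 hp1 p2 hp2 a b ha hb hab
    simp only [Set.mem_setOf_eq] at hp1 hp2
    have hb' : b = 1 - a := by linarith
    subst hb'
    have h := hconcave q' p1 p2 a hq' hp1 hp2 ha (by linarith)
    have hpt : a • p1 + (1 - a) • p2 = fun k => a * p1 k + (1 - a) * p2 k := by
      funext k; simp [smul_eq_mul]
    rw [hpt]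
    simpa [smul_eq_mul] using h
  -- Jensen
  have hJensen : ∀ i j, ∑ i', β i i' * v (post p x i') (post q y j) ω0 ≤
      v (post p x' i) (post q y j) ω0 := by
    intro i j
    have h := ConcaveOn.le_map_sum (hconcOn (post q y j) (hqy j)) (t := Finset.univ)
      (w := β i) (p := fun i' => post p x i')
      (fun i' _ => hβ0 i i') (hβrow i) (fun i' _ => hpx i')
    have heq : (∑ i', β i i' • post p x i') = post p x' i := by
      funext k
      simp only [Finset.sum_apply, Pi.smul_apply, smul_eq_mul]
      exact (hβpost i k).symm
    rw [heq] at h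
    simpa [smul_eq_mul] using h
  -- T2 ≥ 0
  have hT2 : ∀ j, 0 ≤ ∑ i, bar p x i *
      (v (post p x' i) (post q y j) ω0 - v (post p x i) (post q y j) ω0) := by
    intro j
    have h2 : ∑ i, bar p x i * ∑ i', β i i' * v (post p x i') (post q y j) ω0 ≤
        ∑ i, bar p x i * v (post p x' i) (post q y j) ω0 :=
      Finset.sum_le_sum fun i _ => mul_le_mul_of_nonneg_left (hJensen i j) (hxb0 i)
    have e1 : ∑ i, bar p x i * ∑ i', β i i' * v (post p x i') (post q y j) ω0 =
        ∑ i, bar p x i * v (post p x i) (post q y j) ω0 := by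
      simp_rw [Finset.mul_sum]
      rw [Finset.sum_comm]
      refine Finset.sum_congr rfl fun i' _ => ?_
      have e0 : ∑ i, bar p x i * (β i i' * v (post p x i') (post q y j) ω0) =
          (∑ i, β i i' * bar p x i) * v (post p x i') (post q y j) ω0 := by
        rw [Finset.sum_mul]
        exact Finset.sum_congr rfl fun i _ => by ring
      rw [e0, hβsum]
    rw [e1] at h2
    simp_rw [mul_sub, Finset.sum_sub_distrib]
    linarith
  -- key per-(i,j) inequality
  have key : ∀ i j, ρ ω0 i j ω0 * D - 2 * (1 - ρ ω0 i j ω0) * ε * C +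
      (v (post p x' i) (post q y j) ω0 - v (post p x i) (post q y j) ω0) ≤
      ∑ ω, ρ ω0 i j ω * (u (post p x' i) (post q y j) ω - v (post p x i) (post q y j) ω) := by
    intro i j
    have hsplit : (∑ ω, ρ ω0 i j ω *
        (u (post p x' i) (post q y j) ω - v (post p x i) (post q y j) ω)) =
        ρ ω0 i j ω0 * (u (post p x' i) (post q y j) ω0 - v (post p x i) (post q y j) ω0) +
        ∑ ω ∈ Finset.univ.erase ω0, ρ ω0 i j ω *
          (u (post p x' i) (post q y j) ω - v (post p x i) (post q y j) ω) :=
      (Finset.add_sum_erase _ _ (Finset.mem_univ ω0)).symm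
    rw [hsplit]
    have hrest : ∑ ω ∈ Finset.univ.erase ω0, ρ ω0 i j ω = 1 - ρ ω0 i j ω0 := by
      have := Finset.add_sum_erase Finset.univ (ρ ω0 i j) (Finset.mem_univ ω0)
      rw [hρ1] at this
      linarith
    have hterm : ∀ ω ∈ Finset.univ.erase ω0, ρ ω0 i j ω * (-(ε * C)) ≤ ρ ω0 i j ω *
        (u (post p x' i) (post q y j) ω - v (post p x i) (post q y j) ω) := by
      intro ω hω
      have hne : ω ≠ ω0 := (Finset.mem_erase.1 hω).1
      rw [huv _ _ _ hne (hpx' i) (hqy j)]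
      refine mul_le_mul_of_nonneg_left ?_ (hρ0 _ _ _ _)
      have := (abs_le.1 (hvclose i j ω)).1
      linarith
    have hsum2 : (1 - ρ ω0 i j ω0) * (-(ε * C)) ≤ ∑ ω ∈ Finset.univ.erase ω0, ρ ω0 i j ω *
        (u (post p x' i) (post q y j) ω - v (post p x i) (post q y j) ω) := by
      calc (1 - ρ ω0 i j ω0) * (-(ε * C))
          = ∑ ω ∈ Finset.univ.erase ω0, ρ ω0 i j ω * (-(ε * C)) := by
            rw [← Finset.sum_mul, hrest]
        _ ≤ _ := Finset.sum_le_sum hterm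
    have hδ := (abs_le.1 (hvclose i j ω0)).2
    have hD' := hDle (post p x' i) (post q y j) (hpx' i) (hqy j)
    have h0 : 0 ≤ ρ ω0 i j ω0 := hρ0 _ _ _ _
    have h1 : ρ ω0 i j ω0 ≤ 1 := hρle i j
    nlinarith [mul_le_mul_of_nonneg_left hD' h0,
      mul_nonneg (by linarith : (0:ℝ) ≤ 1 - ρ ω0 i j ω0)
        (by linarith : (0:ℝ) ≤ ε * C -
          (v (post p x' i) (post q y j) ω0 - v (post p x i) (post q y j) ω0))]
  -- rewrite goal and assemble
  simp only [hβbar]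
  have hdiff : (∑ i, ∑ j, ∑ ω, ρ ω0 i j ω * bar p x i * bar q y j *
        u (post p x' i) (post q y j) ω) -
      (∑ i, ∑ j, ∑ ω, ρ ω0 i j ω * bar p x i * bar q y j *
        v (post p x i) (post q y j) ω) =
      ∑ i, ∑ j, bar p x i * bar q y j * ∑ ω, ρ ω0 i j ω *
        (u (post p x' i) (post q y j) ω - v (post p x i) (post q y j) ω) := by
    rw [← Finset.sum_sub_distrib]
    refine Finset.sum_congr rfl fun i _ => ?_
    rw [← Finset.sum_sub_distrib]
    refine Finset.sum_congr rfl fun j _ => ?_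
    rw [Finset.mul_sum, ← Finset.sum_sub_distrib]
    exact Finset.sum_congr rfl fun ω _ => by ring
  rw [hdiff]
  have hA : ∑ i, ∑ j, bar p x i * bar q y j * ρ ω0 i j ω0 = Rv := by
    rw [hRv, Finset.sum_comm]
    refine Finset.sum_congr rfl fun j _ => ?_
    rw [Finset.mul_sum]
    exact Finset.sum_congr rfl fun i _ => by ring
  have hB : ∑ i, ∑ j, bar p x i * bar q y j = 1 := by
    simp_rw [← Finset.mul_sum, hybs, mul_one]
    exact hxbs
  have hAlg : D * Rv - 2 * (1 - Rv) * ε * C =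
      ∑ i, ∑ j, bar p x i * bar q y j * (ρ ω0 i j ω0 * D - 2 * (1 - ρ ω0 i j ω0) * ε * C) := by
    have e1 : ∑ i, ∑ j, bar p x i * bar q y j *
        (ρ ω0 i j ω0 * D - 2 * (1 - ρ ω0 i j ω0) * ε * C) =
        (∑ i, ∑ j, bar p x i * bar q y j * ρ ω0 i j ω0) * (D + 2 * ε * C) -
        (∑ i, ∑ j, bar p x i * bar q y j) * (2 * ε * C) := by
      rw [Finset.sum_mul, Finset.sum_mul, ← Finset.sum_sub_distrib]
      refine Finset.sum_congr rfl fun i _ => ?_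
      rw [Finset.sum_mul, Finset.sum_mul, ← Finset.sum_sub_distrib]
      exact Finset.sum_congr rfl fun j _ => by ring
    rw [e1, hA, hB]
    ring
  rw [hAlg]
  have step1 : ∑ i, ∑ j, bar p x i * bar q y j *
      (ρ ω0 i j ω0 * D - 2 * (1 - ρ ω0 i j ω0) * ε * C) ≤
      ∑ i, ∑ j, bar p x i * bar q y j *
      (ρ ω0 i j ω0 * D - 2 * (1 - ρ ω0 i j ω0) * ε * C +
        (v (post p x' i) (post q y j) ω0 - v (post p x i) (post q y j) ω0)) := by
    have e2 : ∑ i, ∑ j, bar p x i * bar q y j *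
        (ρ ω0 i j ω0 * D - 2 * (1 - ρ ω0 i j ω0) * ε * C +
          (v (post p x' i) (post q y j) ω0 - v (post p x i) (post q y j) ω0)) =
        (∑ i, ∑ j, bar p x i * bar q y j *
          (ρ ω0 i j ω0 * D - 2 * (1 - ρ ω0 i j ω0) * ε * C)) +
        ∑ j, bar q y j * ∑ i, bar p x i *
          (v (post p x' i) (post q y j) ω0 - v (post p x i) (post q y j) ω0) := by
      rw [Finset.sum_comm (f := fun i j => bar p x i * bar q y j *
        (ρ ω0 i j ω0 * D - 2 * (1 - ρ ω0 i j ω0) * ε * C +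
          (v (post p x' i) (post q y j) ω0 - v (post p x i) (post q y j) ω0)))]
      rw [Finset.sum_comm (f := fun i j => bar p x i * bar q y j *
        (ρ ω0 i j ω0 * D - 2 * (1 - ρ ω0 i j ω0) * ε * C))]
      rw [← Finset.sum_add_distrib]
      refine Finset.sum_congr rfl fun j _ => ?_
      rw [Finset.mul_sum, ← Finset.sum_add_distrib]
      exact Finset.sum_congr rfl fun i _ => by ring
    rw [e2]
    have : 0 ≤ ∑ j, bar q y j * ∑ i, bar p x i *
        (v (post p x' i) (post q y j) ω0 - v (post p x i) (post q y j) ω0) :=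
      Finset.sum_nonneg fun j _ => mul_nonneg (hyb0 j) (hT2 j)
    linarith
  have step2 : ∑ i, ∑ j, bar p x i * bar q y j *
      (ρ ω0 i j ω0 * D - 2 * (1 - ρ ω0 i j ω0) * ε * C +
        (v (post p x' i) (post q y j) ω0 - v (post p x i) (post q y j) ω0)) ≤
      ∑ i, ∑ j, bar p x i * bar q y j * ∑ ω, ρ ω0 i j ω *
        (u (post p x' i) (post q y j) ω - v (post p x i) (post q y j) ω) :=
    Finset.sum_le_sum fun i _ => Finset.sum_le_sum fun j _ =>
      mul_le_mul_of_nonneg_left (key i j) (mul_nonneg (hxb0 i) (hyb0 j))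
  linarith
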